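/- arXiv:2101.04150 — 4 statements merged into one kernel-verified Lean document; each statement's English description precedes it below -/
import Mathlib

section
/- Let R be a nonnegative integral m-vector with sum n, let S be the all-ones n-vector, and let A, C be (0,1)-matrices with row sum vector R and column sum vector S (so each column has exactly one 1). Then Σ(A) ≥ Σ(C) entrywise if and only if C can be transformed into A by a sequence of Bruhat interchanges. -/
open Finset

/-- A sign-restricted matrix: entries in {0,1,-1}, every partial column sum
(from row 1 down) equals 0 or 1, every partial row sum (from column 1) is nonnegative. -/
def IsSRM {m n : ℕ} (A : Matrix (Fin m) (Fin n) ℤ) : Prop :=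
  (∀ i j, A i j = 0 ∨ A i j = 1 ∨ A i j = -1) ∧
  (∀ i j, (∑ k ∈ Finset.Iic i, A k j) = 0 ∨ (∑ k ∈ Finset.Iic i, A k j) = 1) ∧
  (∀ i j, 0 ≤ ∑ l ∈ Finset.Iic j, A i l)

/-- The sum-matrix: (i,j)-entry is the sum of entries of the leading i×j submatrix. -/
def sumMatrix {m n : ℕ} (A : Matrix (Fin m) (Fin n) ℤ) : Matrix (Fin m) (Fin n) ℤ :=
  fun i j => ∑ p ∈ Finset.Iic i, ∑ q ∈ Finset.Iic j, A p q

/-- A Bruhat interchange: replace a 2×2 submatrix [[0,1],[1,0]] by the identity I₂. -/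
def BruhatInterchange {m n : ℕ} (C D : Matrix (Fin m) (Fin n) ℤ) : Prop :=
  ∃ (i i' : Fin m) (j j' : Fin n), i < i' ∧ j < j' ∧
    C i j = 0 ∧ C i j' = 1 ∧ C i' j = 1 ∧ C i' j' = 0 ∧
    D = fun p q => C p q + (if p = i ∧ q = j then 1 else 0)
      - (if p = i ∧ q = j' then 1 else 0)
      - (if p = i' ∧ q = j then 1 else 0) + (if p = i' ∧ q = j' then 1 else 0)

namespace Stmt15Aux

/-- counting function: number of columns `t` in `s` whose 1 (at row `f t`) lies in
the top `p` rows. -/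
def W {m n : ℕ} (f : Fin n → Fin m) (p : ℕ) (s : Finset (Fin n)) : ℤ :=
  ∑ t ∈ s, if (f t : ℕ) < p then 1 else 0

variable {m n : ℕ}

lemma W_mono (f : Fin n → Fin m) {p p' : ℕ} (h : p ≤ p') (s : Finset (Fin n)) :
    W f p s ≤ W f p' s :=
  Finset.sum_le_sum fun t _ => by split_ifs with h1 h2 <;> omega

lemma Iic_eq_union (j q : Fin n) (h : j ≤ q) :
    Iic q = Iic j ∪ Ioc j q := by
  ext t
  simp only [Finset.mem_Iic, Finset.mem_union, Finset.mem_Ioc]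
  constructor
  · intro ht
    rcases le_or_gt t j with h1 | h1
    · exact Or.inl h1
    · exact Or.inr ⟨h1, ht⟩
  · rintro (h1 | ⟨h1, h2⟩)
    · exact h1.trans h
    · exact h2

lemma disj_Iic_Ioc (j q : Fin n) : Disjoint (Iic j) (Ioc j q) := by
  rw [Finset.disjoint_left]
  intro t ht ht'
  simp only [Finset.mem_Iic] at ht
  simp only [Finset.mem_Ioc] at ht'
  exact absurd ht (not_le.2 ht'.1)

lemma W_split (f : Fin n → Fin m) (p : ℕ) {j q : Fin n} (h : j ≤ q) :
    W f p (Iic q) = W f p (Iic j) + W f p (Ioc j q) := by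
  rw [W, Iic_eq_union j q h, Finset.sum_union (disj_Iic_Ioc j q)]; rfl

lemma univ_eq_union (j : Fin n) : (univ : Finset (Fin n)) = Iic j ∪ Ioi j := by
  ext t
  simp only [Finset.mem_univ, Finset.mem_union, Finset.mem_Iic, Finset.mem_Ioi, true_iff]
  exact le_or_gt t j

lemma disj_Iic_Ioi (j : Fin n) : Disjoint (Iic j) (Ioi j) := by
  rw [Finset.disjoint_left]
  intro t ht ht'
  simp only [Finset.mem_Iic] at ht
  simp only [Finset.mem_Ioi] at ht'
  exact absurd ht (not_le.2 ht')

lemma W_univ_split (f : Fin n → Fin m) (p : ℕ) (j : Fin n) :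
    W f p univ = W f p (Iic j) + W f p (Ioi j) := by
  rw [W, univ_eq_union j, Finset.sum_union (disj_Iic_Ioi j)]; rfl

lemma sum_ind (p0 : Fin m) (q0 : Fin n) (i : Fin m) (j : Fin n) :
    (∑ p ∈ Iic i, ∑ q ∈ Iic j, (if p = p0 ∧ q = q0 then (1:ℤ) else 0))
      = (if p0 ≤ i then (1:ℤ) else 0) * (if q0 ≤ j then 1 else 0) := by
  have : ∀ p : Fin m, (∑ q ∈ Iic j, (if p = p0 ∧ q = q0 then (1:ℤ) else 0))
      = (if p = p0 then (1:ℤ) else 0) * (if q0 ≤ j then 1 else 0) := by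
    intro p
    by_cases hp : p = p0
    · simp [hp, Finset.sum_ite_eq' (Iic j) q0 (fun _ => (1:ℤ))]
    · simp [hp]
  rw [Finset.sum_congr rfl fun p _ => this p, ← Finset.sum_mul,
    Finset.sum_ite_eq' (Iic i) p0 (fun _ => (1:ℤ))]
  simp

lemma sumMatrix_interchange (C : Matrix (Fin m) (Fin n) ℤ)
    (i0 i0' : Fin m) (j0 j0' : Fin n) (i : Fin m) (j : Fin n) :
    sumMatrix (fun p q => C p q + (if p = i0 ∧ q = j0 then 1 else 0)
      - (if p = i0 ∧ q = j0' then 1 else 0)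
      - (if p = i0' ∧ q = j0 then 1 else 0) + (if p = i0' ∧ q = j0' then 1 else 0)) i j
    = sumMatrix C i j +
      ((if i0 ≤ i then (1:ℤ) else 0) - (if i0' ≤ i then 1 else 0)) *
      ((if j0 ≤ j then (1:ℤ) else 0) - (if j0' ≤ j then 1 else 0)) := by
  simp only [sumMatrix, Finset.sum_add_distrib, Finset.sum_sub_distrib]
  rw [sum_ind, sum_ind, sum_ind, sum_ind]
  ring

lemma col_rep (C : Matrix (Fin m) (Fin n) ℤ)
    (hC01 : ∀ i j, C i j = 0 ∨ C i j = 1) (hCS : ∀ j, ∑ i, C i j = 1) :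
    ∃ f : Fin n → Fin m, ∀ p q, C p q = if p = f q then 1 else 0 := by
  have h : ∀ q, ∃ i : Fin m, ∀ p, C p q = if p = i then 1 else 0 := by
    intro q
    have hcard : (univ.filter (fun i => C i q = 1)).card = 1 := by
      have : ∑ i, C i q = (univ.filter (fun i => C i q = 1)).card := by
        rw [Finset.card_filter]
        push_cast
        refine Finset.sum_congr rfl fun i _ => ?_
        rcases hC01 i q with h | h <;> simp [h]
      have h2 := hCS q
      rw [this] at h2
      exact_mod_cast h2
    obtain ⟨a, ha⟩ := Finset.card_eq_one.mp hcard
    refine ⟨a, fun p => ?_⟩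
    by_cases hp : p = a
    · have : a ∈ univ.filter (fun i => C i q = 1) := ha ▸ Finset.mem_singleton_self a
      simp only [Finset.mem_filter] at this
      simp [hp, this.2]
    · have : p ∉ univ.filter (fun i => C i q = 1) := by
        rw [ha]; simp [hp]
      simp only [Finset.mem_filter, Finset.mem_univ, true_and] at this
      rcases hC01 p q with h | h
      · simp [hp, h]
      · exact absurd h this
  choose f hf using h
  exact ⟨f, fun p q => hf q p⟩

lemma sumMatrix_eq_W (C : Matrix (Fin m) (Fin n) ℤ) (f : Fin n → Fin m)
    (hf : ∀ p q, C p q = if p = f q then 1 else 0) (i : Fin m) (j : Fin n) :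
    sumMatrix C i j = W f ((i : ℕ) + 1) (Iic j) := by
  rw [sumMatrix]; refine Finset.sum_comm.trans ?_
  refine Finset.sum_congr rfl fun q _ => ?_
  rw [Finset.sum_congr rfl fun p _ => hf p q,
    Finset.sum_ite_eq' (Iic i) (f q) (fun _ => (1:ℤ))]
  have : f q ∈ Iic i ↔ (f q : ℕ) < (i : ℕ) + 1 := by
    rw [Finset.mem_Iic, Fin.le_def]; omega
  rw [if_congr this rfl rfl]

lemma eq_of_sumMatrix_eq (C A : Matrix (Fin m) (Fin n) ℤ)
    (h : ∀ i j, sumMatrix C i j = sumMatrix A i j) : C = A := by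
  have key : ∀ s : ℕ, ∀ p : Fin m, ∀ q : Fin n, (p : ℕ) + (q : ℕ) = s → C p q = A p q := by
    intro s
    induction s using Nat.strong_induction_on with
    | _ s ih =>
      intro p q hs
      have hsum : ∀ B : Matrix (Fin m) (Fin n) ℤ, sumMatrix B p q
          = B p q + ∑ x ∈ (Iic p ×ˢ Iic q).erase (p, q), B x.1 x.2 := by
        intro B
        simp only [sumMatrix]
        refine (Finset.sum_product' _ _ _).symm.trans ?_
        have hmem : ((p, q) : Fin m × Fin n) ∈ Iic p ×ˢ Iic q := by
          rw [Finset.mem_product]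
          exact ⟨Finset.mem_Iic.2 le_rfl, Finset.mem_Iic.2 le_rfl⟩
        exact (Finset.add_sum_erase _ (fun x => B x.1 x.2) hmem).symm
      have herase : ∑ x ∈ (Iic p ×ˢ Iic q).erase (p, q), C x.1 x.2
          = ∑ x ∈ (Iic p ×ˢ Iic q).erase (p, q), A x.1 x.2 := by
        refine Finset.sum_congr rfl fun x hx => ?_
        simp only [Finset.mem_erase, Finset.mem_product, Finset.mem_Iic] at hx
        have hlt : (x.1 : ℕ) + (x.2 : ℕ) < s := by
          rcases hx with ⟨hne, h1, h2⟩
          have : x.1 ≠ p ∨ x.2 ≠ q := by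
            by_contra hcon
            push_neg at hcon
            exact hne (Prod.ext hcon.1 hcon.2)
          have h1' : (x.1 : ℕ) ≤ p := h1
          have h2' : (x.2 : ℕ) ≤ q := h2
          rcases this with h | h
          · have : (x.1 : ℕ) < p := lt_of_le_of_ne h1' (fun hc => h (Fin.ext hc))
            omega
          · have : (x.2 : ℕ) < q := lt_of_le_of_ne h2' (fun hc => h (Fin.ext hc))
            omega
        exact ih _ hlt x.1 x.2 rfl
      have := h p q
      rw [hsum C, hsum A, herase] at this
      linarith
  funext p q
  exact key ((p : ℕ) + (q : ℕ)) p q rfl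

/-- transfer of dominance from `Fin`-indexed levels to all `ℕ` levels -/
lemma dom_all (f g : Fin n → Fin m)
    (hdom : ∀ (i : Fin m) (j : Fin n), W f ((i : ℕ) + 1) (Iic j) ≤ W g ((i : ℕ) + 1) (Iic j)) :
    ∀ (p : ℕ) (j : Fin n), W f p (Iic j) ≤ W g p (Iic j) := by
  intro p j
  rcases Nat.eq_zero_or_pos p with hp | hp
  · subst hp; simp [W]
  rcases lt_or_ge (p - 1) m with hpm | hpm
  · have := hdom ⟨p - 1, hpm⟩ j
    simpa [Nat.sub_add_cancel hp] using this
  · have h1 : W f p (Iic j) = (Iic j).card := by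
      rw [W]
      rw [Finset.sum_congr rfl fun t _ => if_pos (by omega : ((f t : ℕ) < p))]
      simp
    have h2 : W g p (Iic j) = (Iic j).card := by
      rw [W]
      rw [Finset.sum_congr rfl fun t _ => if_pos (by omega : ((g t : ℕ) < p))]
      simp
    rw [h1, h2]

/-- equal totals at every level, given equal row sums -/
lemma tot_eq (C A : Matrix (Fin m) (Fin n) ℤ) (f g : Fin n → Fin m)
    (hf : ∀ p q, C p q = if p = f q then 1 else 0)
    (hg : ∀ p q, A p q = if p = g q then 1 else 0)
    (R : Fin m → ℤ) (hCR : ∀ i, ∑ j, C i j = R i) (hAR : ∀ i, ∑ j, A i j = R i)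
    (p : ℕ) : W f p univ = W g p univ := by
  have key : ∀ (B : Matrix (Fin m) (Fin n) ℤ) (h : Fin n → Fin m),
      (∀ p q, B p q = if p = h q then 1 else 0) →
      W h p univ = ∑ k ∈ univ.filter (fun k : Fin m => (k : ℕ) < p), ∑ t, B k t := by
    intro B h hB
    rw [W]; refine Eq.trans ?_ Finset.sum_comm
    refine Finset.sum_congr rfl fun t _ => ?_
    rw [Finset.sum_congr rfl fun k _ => hB k t,
      Finset.sum_ite_eq' (univ.filter (fun k : Fin m => (k : ℕ) < p)) (h t) (fun _ => (1:ℤ))]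
    simp
  rw [key C f hf, key A g hg]
  refine Finset.sum_congr rfl fun k _ => ?_
  rw [hCR k, hAR k]

/-- The core combinatorial step: find a valid interchange. -/
lemma find_interchange (f g : Fin n → Fin m)
    (hdom : ∀ (p : ℕ) (j : Fin n), W f p (Iic j) ≤ W g p (Iic j))
    (htot : ∀ p : ℕ, W f p univ = W g p univ)
    (hne : f ≠ g) :
    ∃ (j j' : Fin n), j < j' ∧ (f j' : ℕ) < (f j : ℕ) ∧
      (∀ (p : ℕ) (q : Fin n), (f j' : ℕ) < p → p ≤ (f j : ℕ) → j ≤ q → q < j' →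
        W f p (Iic q) + 1 ≤ W g p (Iic q)) := by
  classical
  have hs : (univ.filter (fun q => f q ≠ g q)).Nonempty := by
    obtain ⟨q, hq⟩ := Function.ne_iff.mp hne
    exact ⟨q, by simp [hq]⟩
  set j := (univ.filter (fun q => f q ≠ g q)).min' hs with hjdef
  have hjne : f j ≠ g j := by
    have := (univ.filter (fun q => f q ≠ g q)).min'_mem hs
    rw [← hjdef] at this
    exact (Finset.mem_filter.mp this).2
  have hjmin : ∀ t, t < j → f t = g t := by
    intro t ht
    by_contra hc
    exact absurd ((univ.filter (fun q => f q ≠ g q)).min'_le t (by simp [hc])) (not_le.2 ht)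
  have key2 : ∀ p : ℕ, W f p (Iic j) =
      W g p (Iic j) + (if (f j : ℕ) < p then 1 else 0) - (if (g j : ℕ) < p then 1 else 0) := by
    intro p
    have hins : (Iic j) = insert j (Iio j) := (Finset.Iio_insert j).symm
    have hnm : j ∉ Iio j := by simp
    have hio : ∑ t ∈ Iio j, (if (f t : ℕ) < p then (1:ℤ) else 0)
        = ∑ t ∈ Iio j, (if (g t : ℕ) < p then (1:ℤ) else 0) := by
      refine Finset.sum_congr rfl fun t ht => ?_
      rw [hjmin t (Finset.mem_Iio.mp ht)]
    rw [W, W, hins, Finset.sum_insert hnm, Finset.sum_insert hnm, hio]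
    ring
  have hgf : (g j : ℕ) < (f j : ℕ) := by
    by_contra hc
    push_neg at hc
    have hlt : (f j : ℕ) < (g j : ℕ) :=
      lt_of_le_of_ne hc (fun h => hjne (Fin.ext h))
    have := hdom ((f j : ℕ) + 1) j
    have h2 := key2 ((f j : ℕ) + 1)
    rw [if_pos (by omega), if_neg (by omega)] at h2
    omega
  set pb := (g j : ℕ) with hpb
  set pt := (f j : ℕ) with hpt
  have hband : ∀ p : ℕ, pb < p → p ≤ pt → W f p (Iic j) = W g p (Iic j) - 1 := by
    intro p h1 h2
    have h3 := key2 p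
    rw [if_neg (by omega), if_pos (by omega)] at h3
    omega
  have hpbcol : W f pb (Iic j) = W g pb (Iic j) := by
    have h3 := key2 pb
    rw [if_neg (by omega), if_neg (by omega)] at h3
    omega
  have hs' : (univ.filter (fun q => j < q ∧ pb ≤ (f q : ℕ) ∧ (f q : ℕ) < pt)).Nonempty := by
    by_contra hc
    rw [Finset.not_nonempty_iff_eq_empty, Finset.filter_eq_empty_iff] at hc
    have hno : ∀ q : Fin n, j < q → (f q : ℕ) < pb ∨ pt ≤ (f q : ℕ) := by
      intro q hq
      have := hc (Finset.mem_univ q)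
      push_neg at this
      rcases lt_or_ge (f q : ℕ) pb with h | h
      · exact Or.inl h
      · exact Or.inr (this hq h)
    have heq : W f pt (Ioi j) = W f pb (Ioi j) := by
      refine Finset.sum_congr rfl fun t ht => ?_
      have h1 := hno t (Finset.mem_Ioi.mp ht)
      exact if_congr (by omega) rfl rfl
    have e1 : W f pt univ = W f pt (Iic j) + W f pt (Ioi j) := W_univ_split f pt j
    have e2 : W g pt univ = W g pt (Iic j) + W g pt (Ioi j) := W_univ_split g pt j
    have e3 : W f pb univ = W f pb (Iic j) + W f pb (Ioi j) := W_univ_split f pb j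
    have e4 : W g pb univ = W g pb (Iic j) + W g pb (Ioi j) := W_univ_split g pb j
    have hb := hband pt hgf le_rfl
    have ht1 := htot pt
    have ht2 := htot pb
    have hm : W g pb (Ioi j) ≤ W g pt (Ioi j) := W_mono g (le_of_lt hgf) (Ioi j)
    omega
  set j' := (univ.filter (fun q => j < q ∧ pb ≤ (f q : ℕ) ∧ (f q : ℕ) < pt)).min' hs'
    with hj'def
  have hj'mem := (univ.filter (fun q => j < q ∧ pb ≤ (f q : ℕ) ∧ (f q : ℕ) < pt)).min'_mem hs'
  rw [← hj'def, Finset.mem_filter] at hj'mem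
  obtain ⟨-, hjj', hpbj', hj'pt⟩ := hj'mem
  have hbetween : ∀ t : Fin n, j < t → t < j' → (f t : ℕ) < pb ∨ pt ≤ (f t : ℕ) := by
    intro t h1 h2
    by_contra hc
    push_neg at hc
    have : t ∈ univ.filter (fun q => j < q ∧ pb ≤ (f q : ℕ) ∧ (f q : ℕ) < pt) := by
      simp only [Finset.mem_filter, Finset.mem_univ, true_and]
      exact ⟨h1, hc.1, hc.2⟩
    exact absurd ((univ.filter _).min'_le t this) (not_le.2 h2)
  refine ⟨j, j', hjj', hj'pt, ?_⟩
  intro p q hp1 hp2 hq1 hq2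
  have hpbp : pb < p := lt_of_le_of_lt hpbj' hp1
  have hsf : W f p (Iic q) = W f p (Iic j) + W f p (Ioc j q) := W_split f p hq1
  have hsg : W g p (Iic q) = W g p (Iic j) + W g p (Ioc j q) := W_split g p hq1
  have hsfb : W f pb (Iic q) = W f pb (Iic j) + W f pb (Ioc j q) := W_split f pb hq1
  have hsgb : W g pb (Iic q) = W g pb (Iic j) + W g pb (Ioc j q) := W_split g pb hq1
  have hIocf : W f p (Ioc j q) = W f pb (Ioc j q) := by
    refine Finset.sum_congr rfl fun t ht => ?_
    rw [Finset.mem_Ioc] at ht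
    have h1 := hbetween t ht.1 (lt_of_le_of_lt ht.2 hq2)
    exact if_congr (by omega) rfl rfl
  have hIocg : W g pb (Ioc j q) ≤ W g p (Ioc j q) := W_mono g (le_of_lt hpbp) (Ioc j q)
  have hIocfg : W f pb (Ioc j q) ≤ W g pb (Ioc j q) := by
    have := hdom pb q
    omega
  have hcol : W f p (Iic j) = W g p (Iic j) - 1 := hband p (by omega) hp2
  omega

end Stmt15Aux
namespace Stmt15Aux

variable {m n : ℕ}

lemma chi_prod (i0 i0' : Fin m) (j0 j0' : Fin n) (hii : i0 < i0') (hjj : j0 < j0')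
    (i : Fin m) (j : Fin n) :
    ((if i0 ≤ i then (1:ℤ) else 0) - (if i0' ≤ i then 1 else 0)) *
      ((if j0 ≤ j then (1:ℤ) else 0) - (if j0' ≤ j then 1 else 0))
    = if i0 ≤ i ∧ i < i0' ∧ j0 ≤ j ∧ j < j0' then 1 else 0 := by
  rcases le_or_gt i0 i with h1 | h1
  · rcases le_or_gt i0' i with h2 | h2
    · rw [if_pos h1, if_pos h2,
        if_neg (fun (h : i0 ≤ i ∧ i < i0' ∧ j0 ≤ j ∧ j < j0') => absurd h2 (not_le.2 h.2.1))]
      ring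
    · rcases le_or_gt j0 j with h3 | h3
      · rcases le_or_gt j0' j with h4 | h4
        · rw [if_pos h1, if_neg (not_le.2 h2), if_pos h3, if_pos h4,
            if_neg (fun (h : i0 ≤ i ∧ i < i0' ∧ j0 ≤ j ∧ j < j0') =>
              absurd h4 (not_le.2 h.2.2.2))]
          ring
        · rw [if_pos h1, if_neg (not_le.2 h2), if_pos h3, if_neg (not_le.2 h4),
            if_pos ⟨h1, h2, h3, h4⟩]
          ring
      · rw [if_pos h1, if_neg (not_le.2 h2), if_neg (not_le.2 h3),
          if_neg (not_le.2 (h3.trans hjj)),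
          if_neg (fun (h : i0 ≤ i ∧ i < i0' ∧ j0 ≤ j ∧ j < j0') =>
            absurd h.2.2.1 (not_le.2 h3))]
        ring
  · rw [if_neg (not_le.2 h1), if_neg (not_le.2 (h1.trans hii)),
      if_neg (fun (h : i0 ≤ i ∧ i < i0' ∧ j0 ≤ j ∧ j < j0') => absurd h.1 (not_le.2 h1))]
    ring

lemma interchange_props (C : Matrix (Fin m) (Fin n) ℤ) (R : Fin m → ℤ)
    (i0 i0' : Fin m) (j0 j0' : Fin n) (hii : i0 < i0') (hjj : j0 < j0')
    (h00 : C i0 j0 = 0) (h01 : C i0 j0' = 1) (h10 : C i0' j0 = 1) (h11 : C i0' j0' = 0)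
    (hC01 : ∀ i j, C i j = 0 ∨ C i j = 1)
    (hCR : ∀ i, ∑ j, C i j = R i) (hCS : ∀ j, ∑ i, C i j = 1) :
    (∀ p q, (C p q + (if p = i0 ∧ q = j0 then 1 else 0)
      - (if p = i0 ∧ q = j0' then 1 else 0)
      - (if p = i0' ∧ q = j0 then 1 else 0) + (if p = i0' ∧ q = j0' then 1 else 0) : ℤ) = 0 ∨
      (C p q + (if p = i0 ∧ q = j0 then 1 else 0)
      - (if p = i0 ∧ q = j0' then 1 else 0)
      - (if p = i0' ∧ q = j0 then 1 else 0) + (if p = i0' ∧ q = j0' then 1 else 0) : ℤ) = 1) ∧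
    (∀ p, ∑ q, (C p q + (if p = i0 ∧ q = j0 then 1 else 0)
      - (if p = i0 ∧ q = j0' then 1 else 0)
      - (if p = i0' ∧ q = j0 then 1 else 0) + (if p = i0' ∧ q = j0' then 1 else 0) : ℤ) = R p) ∧
    (∀ q, ∑ p, (C p q + (if p = i0 ∧ q = j0 then 1 else 0)
      - (if p = i0 ∧ q = j0' then 1 else 0)
      - (if p = i0' ∧ q = j0 then 1 else 0) + (if p = i0' ∧ q = j0' then 1 else 0) : ℤ) = 1) := by
  have hine : i0 ≠ i0' := ne_of_lt hii
  have hjne : j0 ≠ j0' := ne_of_lt hjj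
  refine ⟨?_, ?_, ?_⟩
  · intro p q
    have h01' := hC01 p q
    by_cases h1 : p = i0 <;> by_cases h2 : p = i0' <;> by_cases h3 : q = j0 <;>
      by_cases h4 : q = j0' <;> simp_all
  · intro p
    simp only [Finset.sum_add_distrib, Finset.sum_sub_distrib]
    have e : ∀ (p0 : Fin m) (q0 : Fin n),
        (∑ q : Fin n, if p = p0 ∧ q = q0 then (1:ℤ) else 0) = if p = p0 then 1 else 0 := by
      intro p0 q0
      by_cases h : p = p0
      · simp [h, Finset.sum_ite_eq' univ q0 (fun _ => (1:ℤ))]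
      · simp [h]
    rw [e, e, e, e, hCR]
    ring
  · intro q
    simp only [Finset.sum_add_distrib, Finset.sum_sub_distrib]
    have e : ∀ (p0 : Fin m) (q0 : Fin n),
        (∑ p : Fin m, if p = p0 ∧ q = q0 then (1:ℤ) else 0) = if q = q0 then 1 else 0 := by
      intro p0 q0
      by_cases h : q = q0
      · simp [h, Finset.sum_ite_eq' univ p0 (fun _ => (1:ℤ))]
      · simp [h]
    rw [e, e, e, e, hCS]
    ring

/-- the matrix-level single step -/
lemma step (R : Fin m → ℤ) (A C : Matrix (Fin m) (Fin n) ℤ)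
    (hA01 : ∀ i j, A i j = 0 ∨ A i j = 1) (hC01 : ∀ i j, C i j = 0 ∨ C i j = 1)
    (hAR : ∀ i, ∑ j, A i j = R i) (hCR : ∀ i, ∑ j, C i j = R i)
    (hAS : ∀ j, ∑ i, A i j = 1) (hCS : ∀ j, ∑ i, C i j = 1)
    (hdom : ∀ i j, sumMatrix C i j ≤ sumMatrix A i j) (hCA : C ≠ A) :
    ∃ D : Matrix (Fin m) (Fin n) ℤ, BruhatInterchange C D ∧
      (∀ i j, D i j = 0 ∨ D i j = 1) ∧ (∀ i, ∑ j, D i j = R i) ∧ (∀ j, ∑ i, D i j = 1) ∧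
      (∀ i j, sumMatrix D i j ≤ sumMatrix A i j) ∧
      (∑ i, ∑ j, (sumMatrix A i j - sumMatrix D i j)) + 1
        ≤ ∑ i, ∑ j, (sumMatrix A i j - sumMatrix C i j) := by
  classical
  obtain ⟨f, hf⟩ := col_rep C hC01 hCS
  obtain ⟨g, hg⟩ := col_rep A hA01 hAS
  have hne : f ≠ g := by
    intro h
    apply hCA
    funext p q
    rw [hf, hg, h]
  have hdomW : ∀ (p : ℕ) (j : Fin n), W f p (Iic j) ≤ W g p (Iic j) := by
    apply dom_all
    intro i j
    rw [← sumMatrix_eq_W C f hf, ← sumMatrix_eq_W A g hg]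
    exact hdom i j
  have htot : ∀ p : ℕ, W f p univ = W g p univ := tot_eq C A f g hf hg R hCR hAR
  obtain ⟨j, j', hjj', hlt, hrect⟩ := find_interchange f g hdomW htot hne
  have hii' : f j' < f j := hlt
  have hCij : C (f j') j = 0 := by
    rw [hf, if_neg (fun h => absurd (congrArg Fin.val h) (by omega))]
  have hCij' : C (f j') j' = 1 := by rw [hf, if_pos rfl]
  have hCi'j : C (f j) j = 1 := by rw [hf, if_pos rfl]
  have hCi'j' : C (f j) j' = 0 := by
    rw [hf, if_neg (fun h => absurd (congrArg Fin.val h) (by omega))]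
  obtain ⟨hD01, hDR, hDS⟩ := interchange_props C R (f j') (f j) j j' hii' hjj'
    hCij hCij' hCi'j hCi'j' hC01 hCR hCS
  set D : Matrix (Fin m) (Fin n) ℤ :=
    fun p q => C p q + (if p = f j' ∧ q = j then 1 else 0)
      - (if p = f j' ∧ q = j' then 1 else 0)
      - (if p = f j ∧ q = j then 1 else 0) + (if p = f j ∧ q = j' then 1 else 0) with hD
  have hBI : BruhatInterchange C D :=
    ⟨f j', f j, j, j', hii', hjj', hCij, hCij', hCi'j, hCi'j', hD⟩
  have hSD : ∀ (i2 : Fin m) (j2 : Fin n), sumMatrix D i2 j2 = sumMatrix C i2 j2 +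
      (if f j' ≤ i2 ∧ i2 < f j ∧ j ≤ j2 ∧ j2 < j' then 1 else 0) := by
    intro i2 j2
    rw [hD, sumMatrix_interchange C (f j') (f j) j j' i2 j2,
      chi_prod (f j') (f j) j j' hii' hjj']
  have hrect' : ∀ (i2 : Fin m) (j2 : Fin n), f j' ≤ i2 → i2 < f j → j ≤ j2 → j2 < j' →
      sumMatrix C i2 j2 + 1 ≤ sumMatrix A i2 j2 := by
    intro i2 j2 h1 h2 h3 h4
    rw [sumMatrix_eq_W C f hf, sumMatrix_eq_W A g hg]
    exact hrect ((i2 : ℕ) + 1) j2 (by exact Nat.lt_succ_of_le h1)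
      (by exact h2) h3 h4
  have hdomD : ∀ (i2 : Fin m) (j2 : Fin n), sumMatrix D i2 j2 ≤ sumMatrix A i2 j2 := by
    intro i2 j2
    rw [hSD]
    split_ifs with h
    · obtain ⟨h1, h2, h3, h4⟩ := h
      linarith [hrect' i2 j2 h1 h2 h3 h4]
    · simpa using hdom i2 j2
  refine ⟨D, hBI, hD01, hDR, hDS, hdomD, ?_⟩
  have hterm : ∀ (i2 : Fin m) (j2 : Fin n),
      0 ≤ sumMatrix D i2 j2 - sumMatrix C i2 j2 := by
    intro i2 j2
    rw [hSD]
    split_ifs <;> norm_num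
  have hone : sumMatrix D (f j') j - sumMatrix C (f j') j = 1 := by
    rw [hSD, if_pos ⟨le_rfl, hii', le_rfl, hjj'⟩]
    ring
  have hinner : ∀ i2 : Fin m, 0 ≤ ∑ j2, (sumMatrix D i2 j2 - sumMatrix C i2 j2) :=
    fun i2 => Finset.sum_nonneg fun j2 _ => hterm i2 j2
  have h1 : (1:ℤ) ≤ ∑ j2, (sumMatrix D (f j') j2 - sumMatrix C (f j') j2) := by
    calc (1:ℤ) = sumMatrix D (f j') j - sumMatrix C (f j') j := hone.symm
      _ ≤ _ := Finset.single_le_sum (fun j2 _ => hterm (f j') j2) (Finset.mem_univ j)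
  have h2 : (1:ℤ) ≤ ∑ i2, ∑ j2, (sumMatrix D i2 j2 - sumMatrix C i2 j2) :=
    le_trans h1 (Finset.single_le_sum (fun i2 _ => hinner i2) (Finset.mem_univ (f j')))
  have hrw : ∀ B B' : Matrix (Fin m) (Fin n) ℤ,
      (∑ i2, ∑ j2, (sumMatrix B i2 j2 - sumMatrix B' i2 j2))
      = (∑ i2, ∑ j2, sumMatrix B i2 j2) - ∑ i2, ∑ j2, sumMatrix B' i2 j2 := by
    intro B B'
    rw [← Finset.sum_sub_distrib]
    refine Finset.sum_congr rfl fun i2 _ => ?_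
    rw [← Finset.sum_sub_distrib]
  rw [hrw, hrw]
  rw [hrw] at h2
  linarith

end Stmt15Aux
namespace Stmt15Aux

variable {m n : ℕ}

lemma chi_factor_nonneg {α : Type*} [LinearOrder α] {x y : α} (h : x < y) (z : α) :
    0 ≤ (if x ≤ z then (1:ℤ) else 0) - (if y ≤ z then 1 else 0) := by
  split_ifs with h1 h2 h3
  · norm_num
  · norm_num
  · exact absurd (h.le.trans h3) h1
  · norm_num

lemma bi_mono {B B' : Matrix (Fin m) (Fin n) ℤ} (h : BruhatInterchange B B') :
    ∀ i j, sumMatrix B i j ≤ sumMatrix B' i j := by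
  obtain ⟨i0, i0', j0, j0', hii, hjj, -, -, -, -, hDeq⟩ := h
  intro i j
  rw [hDeq, sumMatrix_interchange B i0 i0' j0 j0' i j]
  have := mul_nonneg (chi_factor_nonneg hii i) (chi_factor_nonneg hjj j)
  linarith

lemma reach (R : Fin m → ℤ) (A : Matrix (Fin m) (Fin n) ℤ)
    (hA01 : ∀ i j, A i j = 0 ∨ A i j = 1)
    (hAR : ∀ i, ∑ j, A i j = R i) (hAS : ∀ j, ∑ i, A i j = 1) :
    ∀ N : ℕ, ∀ C : Matrix (Fin m) (Fin n) ℤ,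
      (∀ i j, C i j = 0 ∨ C i j = 1) → (∀ i, ∑ j, C i j = R i) → (∀ j, ∑ i, C i j = 1) →
      (∀ i j, sumMatrix C i j ≤ sumMatrix A i j) →
      (∑ i, ∑ j, (sumMatrix A i j - sumMatrix C i j)) ≤ (N : ℤ) →
      Relation.ReflTransGen BruhatInterchange C A := by
  intro N
  induction N with
  | zero =>
    intro C hC01 hCR hCS hdom hgap
    have hterm : ∀ (i : Fin m) (j : Fin n), 0 ≤ sumMatrix A i j - sumMatrix C i j :=
      fun i j => by linarith [hdom i j]
    have hzero : (∑ i, ∑ j, (sumMatrix A i j - sumMatrix C i j)) = 0 := by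
      have : 0 ≤ ∑ i, ∑ j, (sumMatrix A i j - sumMatrix C i j) :=
        Finset.sum_nonneg fun i _ => Finset.sum_nonneg fun j _ => hterm i j
      omega
    have hallzero : ∀ (i : Fin m) (j : Fin n), sumMatrix A i j - sumMatrix C i j = 0 := by
      intro i j
      have hout := (Finset.sum_eq_zero_iff_of_nonneg
        (fun i _ => Finset.sum_nonneg fun j _ => hterm i j)).mp hzero i (Finset.mem_univ i)
      exact (Finset.sum_eq_zero_iff_of_nonneg fun j _ => hterm i j).mp hout j (Finset.mem_univ j)
    have : C = A := eq_of_sumMatrix_eq C A fun i j => by linarith [hallzero i j]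
    rw [this]
  | succ N ih =>
    intro C hC01 hCR hCS hdom hgap
    by_cases hCA : C = A
    · rw [hCA]
    · obtain ⟨D, hBI, hD01, hDR, hDS, hdomD, hgapD⟩ :=
        step R A C hA01 hC01 hAR hCR hAS hCS hdom hCA
      refine Relation.ReflTransGen.head hBI (ih D hD01 hDR hDS hdomD ?_)
      push_cast at hgap ⊢
      linarith

end Stmt15Aux

/-- for (0,1)-matrices A, C with row sum vector R (of total sum n) and all
column sums 1, Σ(A) ≥ Σ(C) entrywise iff C can be transformed into A by Bruhat
interchanges. -/
theorem stmt15 (m n : ℕ) (R : Fin m → ℤ) (hR : ∀ i, 0 ≤ R i) (hRsum : ∑ i, R i = n)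
    (A C : Matrix (Fin m) (Fin n) ℤ)
    (hA01 : ∀ i j, A i j = 0 ∨ A i j = 1) (hC01 : ∀ i j, C i j = 0 ∨ C i j = 1)
    (hAR : ∀ i, ∑ j, A i j = R i) (hCR : ∀ i, ∑ j, C i j = R i)
    (hAS : ∀ j, ∑ i, A i j = 1) (hCS : ∀ j, ∑ i, C i j = 1) :
    (∀ i j, sumMatrix C i j ≤ sumMatrix A i j) ↔
      Relation.ReflTransGen BruhatInterchange C A := by
  constructor
  · intro hdom
    exact Stmt15Aux.reach R A hA01 hAR hAS
      (∑ i, ∑ j, (sumMatrix A i j - sumMatrix C i j)).toNat C hC01 hCR hCS hdom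
      (Int.self_le_toNat _)
  · intro h
    clear hA01 hAR hAS
    induction h with
    | refl => exact fun i j => le_rfl
    | tail hstep hbi ih => exact fun i j => le_trans (ih i j) (Stmt15Aux.bi_mono hbi i j)
end

section
/- Let X_n be the set of nonzero vectors x ∈ {0,1,−1}^n in which, ignoring zeros, the nonzero entries alternate between 1 and −1 and the first nonzero entry is 1. Then every vector in X_n is an extreme point of the convex hull of X_n. -/
open Finset

/-- The set X_n of nonzero (0,±1)-vectors whose nonzero entries, read in order,
alternate between 1 and −1 starting with 1. -/
def altSet (n : ℕ) : Set (Fin n → ℝ) :=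
  {x | x ≠ 0 ∧ (∀ i, x i = 0 ∨ x i = 1 ∨ x i = -1) ∧
    (∀ i, x i ≠ 0 → (∀ k < i, x k = 0) → x i = 1) ∧
    (∀ i i', i < i' → x i ≠ 0 → x i' ≠ 0 → (∀ k, i < k → k < i' → x k = 0) →
      x i' = -x i)}

/-- Padding of a vector `Fin n → ℝ` to `ℕ → ℝ` by zeros. -/
def altPad (n : ℕ) (y : Fin n → ℝ) (i : ℕ) : ℝ := if h : i < n then y ⟨i, h⟩ else 0

/-- Partial sums of a (padded) vector. -/
def altS (n : ℕ) (y : Fin n → ℝ) (j : ℕ) : ℝ := ∑ i ∈ Finset.range j, altPad n y i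

lemma altS_smul_add (n : ℕ) (u v : Fin n → ℝ) (a b : ℝ) (j : ℕ) :
    altS n (a • u + b • v) j = a * altS n u j + b * altS n v j := by
  unfold altS altPad
  rw [Finset.mul_sum, Finset.mul_sum, ← Finset.sum_add_distrib]
  refine Finset.sum_congr rfl fun i _ => ?_
  by_cases h : i < n <;> simp [h]

lemma altS_recover (n : ℕ) (y : Fin n → ℝ) (j : Fin n) :
    y j = altS n y (j.val + 1) - altS n y j.val := by
  unfold altS
  rw [Finset.sum_range_succ]
  simp [altPad, j.isLt]

/-- Key combinatorial lemma: all partial sums of an alternating vector are 0 or 1,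
and moreover the partial sum is determined by the last nonzero entry. -/
lemma altS_key (n : ℕ) (x : Fin n → ℝ)
    (h2 : ∀ i, x i = 0 ∨ x i = 1 ∨ x i = -1)
    (h3 : ∀ i, x i ≠ 0 → (∀ k < i, x k = 0) → x i = 1)
    (h4 : ∀ i i', i < i' → x i ≠ 0 → x i' ≠ 0 → (∀ k, i < k → k < i' → x k = 0) →
      x i' = -x i)
    (j : ℕ) :
    (altS n x j = 0 ∨ altS n x j = 1) ∧
    (∀ i < j, altPad n x i ≠ 0 →
      (∀ k, i < k → k < j → altPad n x k = 0) → altS n x j = (altPad n x i + 1) / 2) := by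
  induction j with
  | zero => exact ⟨Or.inl (by simp [altS]), by simp⟩
  | succ j ih =>
    have hrec : altS n x (j + 1) = altS n x j + altPad n x j := by
      unfold altS; rw [Finset.sum_range_succ]
    by_cases hjz : altPad n x j = 0
    · -- last entry is zero: partial sum unchanged
      rw [hrec, hjz, add_zero]
      refine ⟨ih.1, fun i hi hine hgap => ?_⟩
      have hij : i < j := by
        rcases Nat.lt_succ_iff_lt_or_eq.mp hi with h | h
        · exact h
        · exact absurd (h ▸ hjz) hine
      exact ih.2 i hij hine fun k hk1 hk2 => hgap k hk1 (Nat.lt_succ_of_lt hk2)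
    · -- last entry nonzero
      have hjn : j < n := by
        by_contra h
        exact hjz (by simp [altPad, h])
      set jf : Fin n := ⟨j, hjn⟩ with hjf
      have hpadj : altPad n x j = x jf := by simp [altPad, hjn, hjf]
      have hxjf : x jf ≠ 0 := by rwa [hpadj] at hjz
      by_cases hA : ∀ i < j, altPad n x i = 0
      · -- no earlier nonzero entry: x jf = 1
        have hall : ∀ k < jf, x k = 0 := by
          intro k hk
          have : altPad n x k.val = 0 := hA k.val hk
          simpa [altPad, k.isLt] using this
        have hx1 : x jf = 1 := h3 jf hxjf hall
        have hSj : altS n x j = 0 := by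
          unfold altS
          refine Finset.sum_eq_zero fun i hi => hA i (Finset.mem_range.mp hi)
        have hS1 : altS n x (j + 1) = 1 := by rw [hrec, hSj, hpadj, hx1]; ring
        refine ⟨Or.inr hS1, fun i hi hine _ => ?_⟩
        have hij : i = j := by
          rcases Nat.lt_succ_iff_lt_or_eq.mp hi with h | h
          · exact absurd (hA i h) hine
          · exact h
        rw [hS1, hij, hpadj, hx1]; norm_num
      · -- there is an earlier nonzero entry; take the last one
        push_neg at hA
        set F : Finset ℕ := (Finset.range j).filter (fun i => altPad n x i ≠ 0) with hF
        have hFne : F.Nonempty := by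
          obtain ⟨i, hi, hine⟩ := hA
          exact ⟨i, by simp [hF, hi, hine]⟩
        set m : ℕ := F.max' hFne with hm
        have hmF : m ∈ F := F.max'_mem hFne
        have hmj : m < j := (Finset.mem_filter.mp hmF).1 |> Finset.mem_range.mp
        have hmne : altPad n x m ≠ 0 := (Finset.mem_filter.mp hmF).2
        have hmn : m < n := by
          by_contra h
          exact hmne (by simp [altPad, h])
        set mf : Fin n := ⟨m, hmn⟩ with hmf
        have hpadm : altPad n x m = x mf := by simp [altPad, hmn, hmf]
        have hxmf : x mf ≠ 0 := by rwa [hpadm] at hmne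
        have hgap : ∀ k, m < k → k < j → altPad n x k = 0 := by
          intro k hk1 hk2
          by_contra hkne
          have : k ∈ F := by simp [hF, Finset.mem_range.mpr hk2, hkne]
          exact absurd (F.le_max' k this) (Nat.not_le.mpr hk1)
        have hgapf : ∀ k : Fin n, mf < k → k < jf → x k = 0 := by
          intro k hk1 hk2
          have : altPad n x k.val = 0 := hgap k.val hk1 hk2
          simpa [altPad, k.isLt] using this
        have halt : x jf = -x mf := h4 mf jf (by exact hmj) hxmf hxjf hgapf
        have hSj : altS n x j = (altPad n x m + 1) / 2 := ih.2 m hmj hmne hgap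
        have hval : x mf = 1 ∨ x mf = -1 := (h2 mf).resolve_left hxmf
        have hS1 : altS n x (j + 1) = (altPad n x j + 1) / 2 := by
          rw [hrec, hSj, hpadm, hpadj, halt]; ring
        constructor
        · rcases hval with h | h <;> rw [hS1, hpadj, halt, h] <;> norm_num
        · intro i hi hine hgap'
          have hij : i = j := by
            rcases Nat.lt_succ_iff_lt_or_eq.mp hi with h | h
            · by_cases him : i < m
              · exact absurd (hgap' m him (Nat.lt_succ_of_lt hmj)) hmne
              · rcases Nat.lt_or_ge m i with h' | h'
                · exact absurd (hgap i h' h) hine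
                · have : m = i := le_antisymm (Nat.le_of_not_lt him) h'
                  exact absurd (hgap' j (this ▸ hmj) (Nat.lt_succ_self j)) hjz
            · exact h
          rw [hij, hS1]

/-- Every partial-sum functional maps the convex hull of `altSet n` into `[0,1]`. -/
lemma altS_hull_mem (n : ℕ) (u : Fin n → ℝ) (hu : u ∈ convexHull ℝ (altSet n)) (j : ℕ) :
    altS n u j ∈ Set.Icc (0 : ℝ) 1 := by
  have hsub : altSet n ⊆ {y | altS n y j ∈ Set.Icc (0 : ℝ) 1} := by
    intro y hy
    obtain ⟨-, h2, h3, h4⟩ := hy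
    rcases (altS_key n y h2 h3 h4 j).1 with h | h <;> simp [h]
  have hconv : Convex ℝ {y : Fin n → ℝ | altS n y j ∈ Set.Icc (0 : ℝ) 1} := by
    intro y₁ h₁ y₂ h₂ a b ha hb hab
    show altS n (a • y₁ + b • y₂) j ∈ Set.Icc (0 : ℝ) 1
    rw [altS_smul_add]
    exact (convex_Icc (0 : ℝ) 1) h₁ h₂ ha hb hab
  exact convexHull_min hsub hconv hu

/-- every vector in X_n is an extreme point of the convex hull of X_n. -/
theorem stmt16 (n : ℕ) (x : Fin n → ℝ) (hx : x ∈ altSet n) :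
    x ∈ Set.extremePoints ℝ (convexHull ℝ (altSet n)) := by
  rw [mem_extremePoints]
  refine ⟨subset_convexHull ℝ _ hx, fun u hu v hv hseg => ?_⟩
  obtain ⟨a, b, ha, hb, hab, habx⟩ := hseg
  obtain ⟨-, h2, h3, h4⟩ := hx
  -- for each j, the partial sums of u and v agree with that of x
  have hSagree : ∀ j : ℕ, altS n u j = altS n x j ∧ altS n v j = altS n x j := by
    intro j
    have hu' := altS_hull_mem n u hu j
    have hv' := altS_hull_mem n v hv j
    have hsum : a * altS n u j + b * altS n v j = altS n x j := by
      rw [← altS_smul_add, habx]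
    rcases (altS_key n x h2 h3 h4 j).1 with h | h <;> rw [h] <;> rw [h] at hsum <;>
      constructor <;> nlinarith [hu'.1, hu'.2, hv'.1, hv'.2]
  have hux : u = x := by
    funext j
    rw [altS_recover n u j, altS_recover n x j, (hSagree (j.val + 1)).1, (hSagree j.val).1]
  have hvx : v = x := by
    funext j
    rw [altS_recover n v j, altS_recover n x j, (hSagree (j.val + 1)).2, (hSagree j.val).2]
  exact ⟨hux, hvx⟩
end

section
/- The set of extreme points of the polytope P_{m,n}, defined as the convex hull of the m × n sign-restricted matrices, is exactly the set S_{m,n} of m × n sign-restricted matrices. -/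
open Finset

/-- A real sign-restricted matrix: entries in {0,1,-1}, each partial column sum (from the
top) equals 0 or 1, and each partial row sum (from the left) is nonnegative. -/
def IsSRMReal {m n : ℕ} (A : Matrix (Fin m) (Fin n) ℝ) : Prop :=
  (∀ i j, A i j = 0 ∨ A i j = 1 ∨ A i j = -1) ∧
  (∀ i j, (∑ k ∈ Finset.Iic i, A k j) = 0 ∨ (∑ k ∈ Finset.Iic i, A k j) = 1) ∧
  (∀ i j, 0 ≤ ∑ l ∈ Finset.Iic j, A i l)

lemma srm_sum_smul_add {m n : ℕ} (a b : ℝ) (X Y : Matrix (Fin m) (Fin n) ℝ)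
    (i : Fin m) (j : Fin n) :
    ∑ k ∈ Finset.Iic i, (a • X + b • Y) k j =
      a * ∑ k ∈ Finset.Iic i, X k j + b * ∑ k ∈ Finset.Iic i, Y k j := by
  simp [Matrix.add_apply, Matrix.smul_apply, Finset.sum_add_distrib, Finset.mul_sum,
    smul_eq_mul]

lemma srm_colsum_mem {m n : ℕ} :
    convexHull ℝ {A : Matrix (Fin m) (Fin n) ℝ | IsSRMReal A} ⊆
      {X | ∀ i j, (∑ k ∈ Finset.Iic i, X k j) ∈ Set.Icc (0:ℝ) 1} := by
  apply convexHull_min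
  · intro A hA i j
    rcases hA.2.1 i j with h | h <;> simp [h]
  · intro X hX Y hY a b ha hb hab i j
    have hx := hX i j
    have hy := hY i j
    simp only [Set.mem_Icc] at hx hy ⊢
    rw [srm_sum_smul_add]
    constructor
    · nlinarith [hx.1, hy.1]
    · nlinarith [hx.2, hy.2]

lemma srm_eq_of_colsums {m n : ℕ} (X Y : Matrix (Fin m) (Fin n) ℝ)
    (h : ∀ i j, ∑ k ∈ Finset.Iic i, X k j = ∑ k ∈ Finset.Iic i, Y k j) : X = Y := by
  suffices H : ∀ (v : ℕ) (i : Fin m), (i : ℕ) = v → ∀ j, X i j = Y i j by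
    funext i j; exact H i.val i rfl j
  intro v
  induction v using Nat.strong_induction_on with
  | _ v ih =>
    intro i hi j
    have hio : ∑ k ∈ Finset.Iio i, X k j = ∑ k ∈ Finset.Iio i, Y k j := by
      refine Finset.sum_congr rfl fun k hk => ?_
      have hk' : (k : ℕ) < v := hi ▸ Fin.lt_def.mp (Finset.mem_Iio.mp hk)
      exact ih k.val hk' k rfl j
    have hic := h i j
    rw [show Finset.Iic i = insert i (Finset.Iio i) from (Finset.Iio_insert i).symm,
        Finset.sum_insert (by simp), Finset.sum_insert (by simp)] at hic
    linarith

/-- the extreme points of the polytope P_{m,n} = conv(S_{m,n}) are exactly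
the sign-restricted matrices. -/
theorem stmt17 (m n : ℕ) :
    Set.extremePoints ℝ (convexHull ℝ {A : Matrix (Fin m) (Fin n) ℝ | IsSRMReal A}) =
      {A : Matrix (Fin m) (Fin n) ℝ | IsSRMReal A} := by
  apply Set.Subset.antisymm
  · exact extremePoints_convexHull_subset
  · intro A hA
    refine ⟨subset_convexHull ℝ _ hA, ?_⟩
    intro x₁ hx₁ x₂ hx₂ hseg
    obtain ⟨a, b, ha, hb, hab, hx⟩ := hseg
    have h₁ := srm_colsum_mem hx₁
    have h₂ := srm_colsum_mem hx₂
    have key : ∀ i j, ∑ k ∈ Finset.Iic i, x₁ k j = ∑ k ∈ Finset.Iic i, A k j ∧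
        ∑ k ∈ Finset.Iic i, x₂ k j = ∑ k ∈ Finset.Iic i, A k j := by
      intro i j
      have hs : a * ∑ k ∈ Finset.Iic i, x₁ k j + b * ∑ k ∈ Finset.Iic i, x₂ k j =
          ∑ k ∈ Finset.Iic i, A k j := by
        rw [← srm_sum_smul_add, hx]
      have hb₁ := h₁ i j
      have hb₂ := h₂ i j
      simp only [Set.mem_Icc] at hb₁ hb₂
      rcases hA.2.1 i j with h | h <;> rw [h] at hs <;>
        constructor <;> rw [h] <;> nlinarith [hb₁.1, hb₁.2, hb₂.1, hb₂.2]
    exact srm_eq_of_colsums x₁ A fun i j => (key i j).1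
end

section
/- Let c be a nonnegative integer. The convex hull of the m × n integral matrices A = [a_{ij}] satisfying: 0 ≤ Σ_{l=1}^j a_{il} for all i,j; 0 ≤ Σ_{k=1}^i a_{kj} ≤ 1 for all i,j; and Σ_{j=1}^n a_{ij} ≤ c for all i, equals the set of all real m × n matrices satisfying the same linear inequalities. -/
open Finset

def srmA (m n : ℕ) (A : Matrix (Fin m) (Fin n) ℝ) (i j : ℕ) : ℝ :=
  if h : i < m ∧ j < n then A ⟨i, h.1⟩ ⟨j, h.2⟩ else 0

noncomputable def srmB (m n : ℕ) (A : Matrix (Fin m) (Fin n) ℝ) (i j : ℕ) : ℝ :=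
  ∑ k ∈ range i, ∑ l ∈ range j, srmA m n A k l

lemma srmA_coe (m n : ℕ) (A : Matrix (Fin m) (Fin n) ℝ) (i : Fin m) (j : Fin n) :
    srmA m n A i j = A i j := by simp [srmA]

lemma srmB_zero_left (m n : ℕ) (A : Matrix (Fin m) (Fin n) ℝ) (j : ℕ) :
    srmB m n A 0 j = 0 := by simp [srmB]

lemma srmB_zero_right (m n : ℕ) (A : Matrix (Fin m) (Fin n) ℝ) (i : ℕ) :
    srmB m n A i 0 = 0 := by simp [srmB]

lemma sum_Iic_fin (n : ℕ) (g : ℕ → ℝ) (j : Fin n) :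
    ∑ l ∈ Iic j, g l.val = ∑ l ∈ range (j.val + 1), g l := by
  refine Finset.sum_bij' (fun (l : Fin n) _ => (l : ℕ))
    (fun l hl => ⟨l, by simp only [Finset.mem_range] at hl; omega⟩) ?_ ?_ ?_ ?_ ?_
  · intro a ha; simp only [Finset.mem_Iic, Fin.le_def] at ha
    simp only [Finset.mem_range]; omega
  · intro a ha; simp only [Finset.mem_range] at ha
    simp only [Finset.mem_Iic, Fin.le_def]; omega
  · intro a ha; rfl
  · intro a ha; rfl
  · intro a ha; rfl

lemma srmB_succ_left (m n : ℕ) (A : Matrix (Fin m) (Fin n) ℝ) (i j : ℕ) :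
    srmB m n A (i+1) j - srmB m n A i j = ∑ l ∈ range j, srmA m n A i l := by
  rw [srmB, srmB, Finset.sum_range_succ]; ring

lemma srmB_succ_right (m n : ℕ) (A : Matrix (Fin m) (Fin n) ℝ) (i j : ℕ) :
    srmB m n A i (j+1) - srmB m n A i j = ∑ k ∈ range i, srmA m n A k j := by
  rw [srmB, srmB, ← Finset.sum_sub_distrib]
  exact Finset.sum_congr rfl fun k _ => by rw [Finset.sum_range_succ]; ring

lemma srm_rowPS (m n : ℕ) (A : Matrix (Fin m) (Fin n) ℝ) (i : Fin m) (j : Fin n) :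
    ∑ l ∈ Iic j, A i l = srmB m n A (i.val+1) (j.val+1) - srmB m n A i.val (j.val+1) := by
  rw [srmB_succ_left, ← sum_Iic_fin n (fun l => srmA m n A i.val l) j]
  exact Finset.sum_congr rfl fun l _ => (srmA_coe m n A i l).symm

lemma srm_colPS (m n : ℕ) (A : Matrix (Fin m) (Fin n) ℝ) (i : Fin m) (j : Fin n) :
    ∑ k ∈ Iic i, A k j = srmB m n A (i.val+1) (j.val+1) - srmB m n A (i.val+1) j.val := by
  rw [srmB_succ_right, ← sum_Iic_fin m (fun k => srmA m n A k j.val) i]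
  exact Finset.sum_congr rfl fun k _ => (srmA_coe m n A k j).symm

lemma srm_rowTot (m n : ℕ) (A : Matrix (Fin m) (Fin n) ℝ) (i : Fin m) :
    ∑ j, A i j = srmB m n A (i.val+1) n - srmB m n A i.val n := by
  rw [srmB_succ_left]
  rw [← Fin.sum_univ_eq_sum_range (fun l => srmA m n A i.val l) n]
  exact Finset.sum_congr rfl fun l _ => (srmA_coe m n A i l).symm

lemma srm_entry (m n : ℕ) (A : Matrix (Fin m) (Fin n) ℝ) (i : Fin m) (j : Fin n) :
    A i j = srmB m n A (i.val+1) (j.val+1) - srmB m n A i.val (j.val+1)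
      - srmB m n A (i.val+1) j.val + srmB m n A i.val j.val := by
  have h1 := srmB_succ_right m n A (i.val+1) j.val
  have h2 := srmB_succ_right m n A i.val j.val
  have : (∑ k ∈ range (i.val+1), srmA m n A k j.val) - ∑ k ∈ range i.val, srmA m n A k j.val
      = srmA m n A i.val j.val := by rw [Finset.sum_range_succ]; ring
  rw [← srmA_coe m n A i j]; linarith

lemma srm_tele2 (φ : ℕ → ℕ → ℝ) (h0 : ∀ j, φ 0 j = 0) (h0' : ∀ i, φ i 0 = 0) (i j : ℕ) :
    ∑ k ∈ range i, ∑ l ∈ range j,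
      (φ (k+1) (l+1) - φ k (l+1) - φ (k+1) l + φ k l) = φ i j := by
  have inner : ∀ k, ∑ l ∈ range j,
      (φ (k+1) (l+1) - φ k (l+1) - φ (k+1) l + φ k l) = φ (k+1) j - φ k j := by
    intro k
    have := Finset.sum_range_sub (f := fun l => φ (k+1) l - φ k l) j
    rw [show ∑ l ∈ range j, (φ (k+1) (l+1) - φ k (l+1) - φ (k+1) l + φ k l)
        = ∑ l ∈ range j, ((φ (k+1) (l+1) - φ k (l+1)) - (φ (k+1) l - φ k l)) from
        Finset.sum_congr rfl fun l _ => by ring, this, h0' k, h0' (k+1)]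
    ring
  rw [Finset.sum_congr rfl fun k _ => inner k, Finset.sum_range_sub (f := fun k => φ k j), h0 j]
  ring

noncomputable def srmInd (f x : ℝ) : ℝ := if Int.fract x = f then 1 else 0

lemma srm_up_le (f x y : ℝ) (hf : f < 1) (hy : Int.fract y ≤ f) (u : ℤ) (h : x - y ≤ u) :
    (x + (1-f) * srmInd f x) - (y + (1-f) * srmInd f y) ≤ u := by
  have ex := Int.floor_add_fract x
  have ey := Int.floor_add_fract y
  have hy0 := Int.fract_nonneg y
  unfold srmInd
  split_ifs with h1 h2 h2
  · linarith
  · have hylt : Int.fract y < f := lt_of_le_of_ne hy h2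
    have hint : (⌊x⌋ - ⌊y⌋ : ℤ) < u := by
      have : ((⌊x⌋ - ⌊y⌋ : ℤ) : ℝ) < u := by push_cast; linarith
      exact_mod_cast this
    have hint' : ((⌊x⌋ - ⌊y⌋ : ℤ) : ℝ) + 1 ≤ u := by exact_mod_cast hint
    push_cast at hint'; linarith
  · linarith
  · linarith

lemma srm_up_ge (f x y : ℝ) (hf : f < 1) (hx : Int.fract x ≤ f) (l : ℤ) (h : (l:ℝ) ≤ x - y) :
    (l:ℝ) ≤ (x + (1-f) * srmInd f x) - (y + (1-f) * srmInd f y) := by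
  have ex := Int.floor_add_fract x
  have ey := Int.floor_add_fract y
  have hx0 := Int.fract_nonneg x
  unfold srmInd
  split_ifs with h1 h2 h2
  · linarith
  · linarith
  · have hxlt : Int.fract x < f := lt_of_le_of_ne hx h1
    have hint : (l : ℤ) < ⌊x⌋ - ⌊y⌋ := by
      have : (l : ℝ) < ((⌊x⌋ - ⌊y⌋ : ℤ) : ℝ) := by push_cast; linarith
      exact_mod_cast this
    have hint' : (l : ℝ) + 1 ≤ ((⌊x⌋ - ⌊y⌋ : ℤ) : ℝ) := by exact_mod_cast hint
    push_cast at hint'; linarith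
  · linarith

lemma srm_down_le (f f' x y : ℝ) (hf'0 : 0 ≤ f') (hff : f' < f) (hf : f < 1)
    (hx : Int.fract x = f ∨ Int.fract x ≤ f') (u : ℤ) (h : x - y ≤ u) :
    (x - (f-f') * srmInd f x) - (y - (f-f') * srmInd f y) ≤ u := by
  have ex := Int.floor_add_fract x
  have ey := Int.floor_add_fract y
  have hx0 := Int.fract_nonneg x
  unfold srmInd
  split_ifs with h1 h2 h2
  · linarith
  · linarith
  · have hxle : Int.fract x ≤ f' := hx.resolve_left h1
    have hint : (⌊x⌋ - ⌊y⌋ : ℤ) ≤ u := by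
      have : ((⌊x⌋ - ⌊y⌋ : ℤ) : ℝ) < (u:ℝ) + 1 := by push_cast; linarith
      have h2' : (⌊x⌋ - ⌊y⌋ : ℤ) < u + 1 := by exact_mod_cast this
      omega
    have hint' : ((⌊x⌋ - ⌊y⌋ : ℤ) : ℝ) ≤ u := by exact_mod_cast hint
    push_cast at hint'; linarith
  · linarith

lemma srm_down_ge (f f' x y : ℝ) (hf'0 : 0 ≤ f') (hff : f' < f) (hf : f < 1)
    (hy : Int.fract y = f ∨ Int.fract y ≤ f') (l : ℤ) (h : (l:ℝ) ≤ x - y) :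
    (l:ℝ) ≤ (x - (f-f') * srmInd f x) - (y - (f-f') * srmInd f y) := by
  have ex := Int.floor_add_fract x
  have ey := Int.floor_add_fract y
  have hy0 := Int.fract_nonneg y
  unfold srmInd
  split_ifs with h1 h2 h2
  · linarith
  · have hyle : Int.fract y ≤ f' := hy.resolve_left h2
    have hint : (l : ℤ) ≤ ⌊x⌋ - ⌊y⌋ := by
      have : (l:ℝ) - 1 < ((⌊x⌋ - ⌊y⌋ : ℤ) : ℝ) := by push_cast; linarith
      have h2' : (l : ℤ) - 1 < ⌊x⌋ - ⌊y⌋ := by exact_mod_cast this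
      omega
    have hint' : (l : ℝ) ≤ ((⌊x⌋ - ⌊y⌋ : ℤ) : ℝ) := by exact_mod_cast hint
    push_cast at hint'; linarith
  · linarith
  · linarith

noncomputable def srmPert (m n : ℕ) (A : Matrix (Fin m) (Fin n) ℝ) (t f : ℝ) :
    Matrix (Fin m) (Fin n) ℝ := fun p q =>
  A p q + t * (srmInd f (srmB m n A (p.val+1) (q.val+1))
    - srmInd f (srmB m n A p.val (q.val+1))
    - srmInd f (srmB m n A (p.val+1) q.val)
    + srmInd f (srmB m n A p.val q.val))

lemma srmB_pert (m n : ℕ) (A : Matrix (Fin m) (Fin n) ℝ) (t f : ℝ) (hf : f ≠ 0)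
    (i j : ℕ) (hi : i ≤ m) (hj : j ≤ n) :
    srmB m n (srmPert m n A t f) i j = srmB m n A i j + t * srmInd f (srmB m n A i j) := by
  set φ : ℕ → ℕ → ℝ := fun i j => t * srmInd f (srmB m n A i j) with hφ
  have hb0 : ∀ j, φ 0 j = 0 := by
    intro j; simp only [hφ, srmInd, srmB_zero_left, Int.fract_zero]
    rw [if_neg (Ne.symm hf)]; ring
  have hb0' : ∀ i, φ i 0 = 0 := by
    intro i; simp only [hφ, srmInd, srmB_zero_right, Int.fract_zero]
    rw [if_neg (Ne.symm hf)]; ring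
  have key : srmB m n (srmPert m n A t f) i j
      = srmB m n A i j + ∑ k ∈ range i, ∑ l ∈ range j,
          (φ (k+1) (l+1) - φ k (l+1) - φ (k+1) l + φ k l) := by
    rw [srmB, srmB, ← Finset.sum_add_distrib]
    refine Finset.sum_congr rfl fun k hk => ?_
    rw [← Finset.sum_add_distrib]
    refine Finset.sum_congr rfl fun l hl => ?_
    have hkm : k < m := lt_of_lt_of_le (Finset.mem_range.mp hk) hi
    have hln : l < n := lt_of_lt_of_le (Finset.mem_range.mp hl) hj
    rw [srmA, srmA, dif_pos ⟨hkm, hln⟩, dif_pos ⟨hkm, hln⟩]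
    show srmPert m n A t f ⟨k, hkm⟩ ⟨l, hln⟩ = _
    simp only [srmPert, hφ]
    ring
  rw [key, srm_tele2 φ hb0 hb0' i j]

noncomputable def srmF (m n : ℕ) (A : Matrix (Fin m) (Fin n) ℝ) : Finset ℝ :=
  ((range (m+1) ×ˢ range (n+1)).image fun p => Int.fract (srmB m n A p.1 p.2)).filter (· ≠ 0)

lemma srmF_mem (m n : ℕ) (A : Matrix (Fin m) (Fin n) ℝ) (z : ℝ) :
    z ∈ srmF m n A ↔
      (∃ i j, i ≤ m ∧ j ≤ n ∧ Int.fract (srmB m n A i j) = z) ∧ z ≠ 0 := by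
  simp only [srmF, Finset.mem_filter, Finset.mem_image, Finset.mem_product, Finset.mem_range,
    Nat.lt_succ_iff, Prod.exists]
  constructor
  · rintro ⟨⟨i, j, ⟨hi, hj⟩, hz⟩, h0⟩
    exact ⟨⟨i, j, hi, hj, hz⟩, h0⟩
  · rintro ⟨⟨i, j, hi, hj, hz⟩, h0⟩
    exact ⟨⟨i, j, ⟨hi, hj⟩, hz⟩, h0⟩

lemma srmF_nonneg (m n : ℕ) (A : Matrix (Fin m) (Fin n) ℝ) {z : ℝ} (hz : z ∈ srmF m n A) :
    0 ≤ z ∧ z < 1 ∧ z ≠ 0 := by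
  rw [srmF_mem] at hz
  obtain ⟨⟨i, j, _, _, hz'⟩, h0⟩ := hz
  exact ⟨hz' ▸ Int.fract_nonneg _, hz' ▸ Int.fract_lt_one _, h0⟩

lemma srmKey (m n c : ℕ) : ∀ k (A : Matrix (Fin m) (Fin n) ℝ),
    ((∀ i j, 0 ≤ ∑ l ∈ Finset.Iic j, A i l) ∧
     (∀ i j, 0 ≤ ∑ k ∈ Finset.Iic i, A k j ∧ ∑ k ∈ Finset.Iic i, A k j ≤ 1) ∧
     (∀ i, ∑ j, A i j ≤ (c : ℝ))) →
    (srmF m n A).card ≤ k →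
    A ∈ convexHull ℝ {A : Matrix (Fin m) (Fin n) ℝ |
        (∀ i j, ∃ z : ℤ, A i j = (z : ℝ)) ∧
        (∀ i j, 0 ≤ ∑ l ∈ Finset.Iic j, A i l) ∧
        (∀ i j, 0 ≤ ∑ k ∈ Finset.Iic i, A k j ∧ ∑ k ∈ Finset.Iic i, A k j ≤ 1) ∧
        (∀ i, ∑ j, A i j ≤ (c : ℝ))} := by
  intro k
  induction k with
  | zero =>
    intro A hA hcard
    have hF : srmF m n A = ∅ := Finset.card_eq_zero.mp (Nat.le_zero.mp hcard)
    have hint : ∀ i j, i ≤ m → j ≤ n → ∃ z : ℤ, srmB m n A i j = (z : ℝ) := by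
      intro i j hi hj
      by_cases h : Int.fract (srmB m n A i j) = 0
      · exact ⟨⌊srmB m n A i j⌋, by have := Int.fract_add_floor (srmB m n A i j); linarith⟩
      · exfalso
        have : Int.fract (srmB m n A i j) ∈ srmF m n A :=
          (srmF_mem m n A _).mpr ⟨⟨i, j, hi, hj, rfl⟩, h⟩
        rw [hF] at this; exact absurd this (Finset.notMem_empty _)
    refine subset_convexHull ℝ _ ?_
    refine ⟨?_, hA.1, hA.2.1, hA.2.2⟩
    intro i j
    obtain ⟨z1, h1⟩ := hint (i.val+1) (j.val+1) i.isLt j.isLt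
    obtain ⟨z2, h2⟩ := hint i.val (j.val+1) (le_of_lt i.isLt) j.isLt
    obtain ⟨z3, h3⟩ := hint (i.val+1) j.val i.isLt (le_of_lt j.isLt)
    obtain ⟨z4, h4⟩ := hint i.val j.val (le_of_lt i.isLt) (le_of_lt j.isLt)
    exact ⟨z1 - z2 - z3 + z4, by rw [srm_entry m n A i j, h1, h2, h3, h4]; push_cast; ring⟩
  | succ k ih =>
    intro A hA hcard
    by_cases hk : (srmF m n A).card ≤ k
    · exact ih A hA hk
    have hne : (srmF m n A).Nonempty := by
      rw [← Finset.card_pos]; omega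
    set f := (srmF m n A).max' hne with hfdef
    have hfF : f ∈ srmF m n A := Finset.max'_mem _ _
    obtain ⟨hf0', hf1, hfne⟩ := srmF_nonneg m n A hfF
    have hf0 : 0 < f := lt_of_le_of_ne hf0' (Ne.symm hfne)
    have hle : ∀ i j, i ≤ m → j ≤ n → Int.fract (srmB m n A i j) ≤ f := by
      intro i j hi hj
      by_cases h : Int.fract (srmB m n A i j) = 0
      · rw [h]; exact hf0'
      · exact Finset.le_max' _ _ ((srmF_mem m n A _).mpr ⟨⟨i, j, hi, hj, rfl⟩, h⟩)
    set f' : ℝ := if h2 : ((srmF m n A).erase f).Nonempty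
      then ((srmF m n A).erase f).max' h2 else 0 with hf'def
    have hf'0 : 0 ≤ f' := by
      rw [hf'def]; split_ifs with h2
      · exact (srmF_nonneg m n A (Finset.mem_of_mem_erase (Finset.max'_mem _ h2))).1
      · exact le_refl 0
    have hf'f : f' < f := by
      rw [hf'def]; split_ifs with h2
      · have hmem := Finset.max'_mem _ h2
        exact lt_of_le_of_ne (Finset.le_max' _ _ (Finset.mem_of_mem_erase hmem))
          (Finset.ne_of_mem_erase hmem)
      · exact hf0
    have hgap : ∀ i j, i ≤ m → j ≤ n →
        Int.fract (srmB m n A i j) = f ∨ Int.fract (srmB m n A i j) ≤ f' := by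
      intro i j hi hj
      by_cases h : Int.fract (srmB m n A i j) = f
      · exact Or.inl h
      by_cases h0 : Int.fract (srmB m n A i j) = 0
      · exact Or.inr (h0 ▸ hf'0)
      right
      have hmem : Int.fract (srmB m n A i j) ∈ (srmF m n A).erase f :=
        Finset.mem_erase.mpr ⟨h, (srmF_mem m n A _).mpr ⟨⟨i, j, hi, hj, rfl⟩, h0⟩⟩
      rw [hf'def, dif_pos ⟨_, hmem⟩]
      exact Finset.le_max' _ _ hmem
    -- the two perturbed matrices
    set Ap := srmPert m n A (1-f) f with hApdef
    set Am := srmPert m n A (-(f-f')) f with hAmdef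
    have hBp : ∀ i j, i ≤ m → j ≤ n →
        srmB m n Ap i j = srmB m n A i j + (1-f) * srmInd f (srmB m n A i j) :=
      fun i j hi hj => srmB_pert m n A (1-f) f (ne_of_gt hf0) i j hi hj
    have hBm : ∀ i j, i ≤ m → j ≤ n →
        srmB m n Am i j = srmB m n A i j - (f-f') * srmInd f (srmB m n A i j) := by
      intro i j hi hj
      rw [hAmdef, srmB_pert m n A (-(f-f')) f (ne_of_gt hf0) i j hi hj]; ring
    -- constraints for Ap
    have hApC : (∀ i j, 0 ≤ ∑ l ∈ Finset.Iic j, Ap i l) ∧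
        (∀ i j, 0 ≤ ∑ k ∈ Finset.Iic i, Ap k j ∧ ∑ k ∈ Finset.Iic i, Ap k j ≤ 1) ∧
        (∀ i, ∑ j, Ap i j ≤ (c : ℝ)) := by
      refine ⟨?_, ?_, ?_⟩
      · intro i j
        have h0 := hA.1 i j
        rw [srm_rowPS m n A i j] at h0
        rw [srm_rowPS m n Ap i j, hBp _ _ i.isLt j.isLt, hBp _ _ (le_of_lt i.isLt) j.isLt]
        have := srm_up_ge f (srmB m n A (i.val+1) (j.val+1)) (srmB m n A i.val (j.val+1))
          hf1 (hle _ _ i.isLt j.isLt) 0 (by push_cast; linarith)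
        push_cast at this; linarith
      · intro i j
        have h0 := hA.2.1 i j
        rw [srm_colPS m n A i j] at h0
        rw [srm_colPS m n Ap i j, hBp _ _ i.isLt j.isLt, hBp _ _ i.isLt (le_of_lt j.isLt)]
        constructor
        · have := srm_up_ge f (srmB m n A (i.val+1) (j.val+1)) (srmB m n A (i.val+1) j.val)
            hf1 (hle _ _ i.isLt j.isLt) 0 (by push_cast; linarith [h0.1])
          push_cast at this; linarith
        · have := srm_up_le f (srmB m n A (i.val+1) (j.val+1)) (srmB m n A (i.val+1) j.val)
            hf1 (hle _ _ i.isLt (le_of_lt j.isLt)) 1 (by push_cast; linarith [h0.2])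
          push_cast at this; linarith
      · intro i
        have h0 := hA.2.2 i
        rw [srm_rowTot m n A i] at h0
        rw [srm_rowTot m n Ap i, hBp _ _ i.isLt le_rfl, hBp _ _ (le_of_lt i.isLt) le_rfl]
        have := srm_up_le f (srmB m n A (i.val+1) n) (srmB m n A i.val n)
          hf1 (hle _ _ (le_of_lt i.isLt) le_rfl) c (by push_cast; linarith)
        push_cast at this; linarith
    -- constraints for Am
    have hAmC : (∀ i j, 0 ≤ ∑ l ∈ Finset.Iic j, Am i l) ∧
        (∀ i j, 0 ≤ ∑ k ∈ Finset.Iic i, Am k j ∧ ∑ k ∈ Finset.Iic i, Am k j ≤ 1) ∧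
        (∀ i, ∑ j, Am i j ≤ (c : ℝ)) := by
      refine ⟨?_, ?_, ?_⟩
      · intro i j
        have h0 := hA.1 i j
        rw [srm_rowPS m n A i j] at h0
        rw [srm_rowPS m n Am i j, hBm _ _ i.isLt j.isLt, hBm _ _ (le_of_lt i.isLt) j.isLt]
        have := srm_down_ge f f' (srmB m n A (i.val+1) (j.val+1)) (srmB m n A i.val (j.val+1))
          hf'0 hf'f hf1 (hgap _ _ (le_of_lt i.isLt) j.isLt) 0 (by push_cast; linarith)
        push_cast at this; linarith
      · intro i j
        have h0 := hA.2.1 i j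
        rw [srm_colPS m n A i j] at h0
        rw [srm_colPS m n Am i j, hBm _ _ i.isLt j.isLt, hBm _ _ i.isLt (le_of_lt j.isLt)]
        constructor
        · have := srm_down_ge f f' (srmB m n A (i.val+1) (j.val+1)) (srmB m n A (i.val+1) j.val)
            hf'0 hf'f hf1 (hgap _ _ i.isLt (le_of_lt j.isLt)) 0 (by push_cast; linarith [h0.1])
          push_cast at this; linarith
        · have := srm_down_le f f' (srmB m n A (i.val+1) (j.val+1)) (srmB m n A (i.val+1) j.val)
            hf'0 hf'f hf1 (hgap _ _ i.isLt j.isLt) 1 (by push_cast; linarith [h0.2])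
          push_cast at this; linarith
      · intro i
        have h0 := hA.2.2 i
        rw [srm_rowTot m n A i] at h0
        rw [srm_rowTot m n Am i, hBm _ _ i.isLt le_rfl, hBm _ _ (le_of_lt i.isLt) le_rfl]
        have := srm_down_le f f' (srmB m n A (i.val+1) n) (srmB m n A i.val n)
          hf'0 hf'f hf1 (hgap _ _ i.isLt le_rfl) c (by push_cast; linarith)
        push_cast at this; linarith
    -- card decrease for Ap
    have hcardAp : (srmF m n Ap).card ≤ k := by
      have hsub : srmF m n Ap ⊆ (srmF m n A).erase f := by
        intro z hz
        obtain ⟨⟨i, j, hi, hj, hz'⟩, h0⟩ := (srmF_mem m n Ap z).mp hz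
        rw [hBp i j hi hj] at hz'
        by_cases hind : Int.fract (srmB m n A i j) = f
        · exfalso
          apply h0
          rw [← hz', srmInd, if_pos hind]
          have hfl := Int.fract_add_floor (srmB m n A i j)
          have : srmB m n A i j + (1-f) * 1 = ((⌊srmB m n A i j⌋ + 1 : ℤ) : ℝ) := by
            push_cast; rw [hind] at hfl; linarith
          rw [this, Int.fract_intCast]
        · rw [srmInd, if_neg hind] at hz'
          simp only [mul_zero, add_zero] at hz'
          refine Finset.mem_erase.mpr ⟨?_, (srmF_mem m n A z).mpr ⟨⟨i, j, hi, hj, hz'⟩, h0⟩⟩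
          rw [← hz']; exact hind
      calc (srmF m n Ap).card ≤ ((srmF m n A).erase f).card := Finset.card_le_card hsub
        _ = (srmF m n A).card - 1 := Finset.card_erase_of_mem hfF
        _ ≤ k := by omega
    -- card decrease for Am
    have hcardAm : (srmF m n Am).card ≤ k := by
      have hsub : srmF m n Am ⊆ (srmF m n A).erase f := by
        intro z hz
        obtain ⟨⟨i, j, hi, hj, hz'⟩, h0⟩ := (srmF_mem m n Am z).mp hz
        rw [hBm i j hi hj] at hz'
        by_cases hind : Int.fract (srmB m n A i j) = f
        · rw [srmInd, if_pos hind] at hz'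
          have hfl := Int.fract_add_floor (srmB m n A i j)
          have heq : srmB m n A i j - (f-f') * 1 = ((⌊srmB m n A i j⌋ : ℤ) : ℝ) + f' := by
            push_cast; rw [hind] at hfl; linarith
          rw [heq, Int.fract_intCast_add, Int.fract_eq_self.mpr ⟨hf'0, lt_trans hf'f hf1⟩] at hz'
          -- z = f'
          rw [hf'def] at hz'
          by_cases h2 : ((srmF m n A).erase f).Nonempty
          · rw [dif_pos h2] at hz'
            rw [← hz']; exact Finset.max'_mem _ h2
          · exfalso; apply h0; rw [← hz', dif_neg h2]
        · rw [srmInd, if_neg hind] at hz'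
          simp only [mul_zero, sub_zero] at hz'
          refine Finset.mem_erase.mpr ⟨?_, (srmF_mem m n A z).mpr ⟨⟨i, j, hi, hj, hz'⟩, h0⟩⟩
          rw [← hz']; exact hind
      calc (srmF m n Am).card ≤ ((srmF m n A).erase f).card := Finset.card_le_card hsub
        _ = (srmF m n A).card - 1 := Finset.card_erase_of_mem hfF
        _ ≤ k := by omega
    -- convex combination
    have hmemp := ih Ap hApC hcardAp
    have hmemm := ih Am hAmC hcardAm
    have h1f' : (0:ℝ) < 1 - f' := by linarith
    set lam := (f - f') / (1 - f') with hlam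
    set mu := (1 - f) / (1 - f') with hmu
    have hlam0 : 0 ≤ lam := div_nonneg (by linarith) (le_of_lt h1f')
    have hmu0 : 0 ≤ mu := div_nonneg (by linarith) (le_of_lt h1f')
    have hsum : lam + mu = 1 := by
      rw [hlam, hmu, ← add_div, div_eq_one_iff_eq (ne_of_gt h1f')]; ring
    have hcomb : lam • Ap + mu • Am = A := by
      have hkey : lam * (1-f) + mu * (-(f-f')) = 0 := by
        rw [hlam, hmu]; field_simp; ring
      funext p q
      simp only [Matrix.add_apply, Matrix.smul_apply, smul_eq_mul, hApdef, hAmdef, srmPert]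
      linear_combination (A p q) * hsum + (srmInd f (srmB m n A (p.val+1) (q.val+1))
        - srmInd f (srmB m n A p.val (q.val+1)) - srmInd f (srmB m n A (p.val+1) q.val)
        + srmInd f (srmB m n A p.val q.val)) * hkey
    have := (convex_convexHull ℝ _) hmemp hmemm hlam0 hmu0 hsum
    rwa [hcomb] at this

/-- the convex hull of the integral matrices satisfying the c-SRM
inequalities equals the set of all real matrices satisfying those inequalities. -/
theorem stmt18 (m n : ℕ) (c : ℕ) :
    convexHull ℝ {A : Matrix (Fin m) (Fin n) ℝ |
        (∀ i j, ∃ z : ℤ, A i j = (z : ℝ)) ∧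
        (∀ i j, 0 ≤ ∑ l ∈ Finset.Iic j, A i l) ∧
        (∀ i j, 0 ≤ ∑ k ∈ Finset.Iic i, A k j ∧ ∑ k ∈ Finset.Iic i, A k j ≤ 1) ∧
        (∀ i, ∑ j, A i j ≤ (c : ℝ))} =
      {A : Matrix (Fin m) (Fin n) ℝ |
        (∀ i j, 0 ≤ ∑ l ∈ Finset.Iic j, A i l) ∧
        (∀ i j, 0 ≤ ∑ k ∈ Finset.Iic i, A k j ∧ ∑ k ∈ Finset.Iic i, A k j ≤ 1) ∧
        (∀ i, ∑ j, A i j ≤ (c : ℝ))} := by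
  apply Set.Subset.antisymm
  · refine convexHull_min ?_ ?_
    · intro A hA
      exact ⟨hA.2.1, hA.2.2.1, hA.2.2.2⟩
    · intro A hA B hB a b ha hb hab
      refine ⟨?_, ?_, ?_⟩
      · intro i j
        have h1 := hA.1 i j; have h2 := hB.1 i j
        simp only [Matrix.add_apply, Matrix.smul_apply, smul_eq_mul]
        rw [Finset.sum_add_distrib, ← Finset.mul_sum, ← Finset.mul_sum]
        nlinarith
      · intro i j
        have h1 := hA.2.1 i j; have h2 := hB.2.1 i j
        simp only [Matrix.add_apply, Matrix.smul_apply, smul_eq_mul]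
        rw [Finset.sum_add_distrib, ← Finset.mul_sum, ← Finset.mul_sum]
        constructor
        · nlinarith [h1.1, h2.1]
        · nlinarith [h1.2, h2.2]
      · intro i
        have h1 := hA.2.2 i; have h2 := hB.2.2 i
        simp only [Matrix.add_apply, Matrix.smul_apply, smul_eq_mul]
        rw [Finset.sum_add_distrib, ← Finset.mul_sum, ← Finset.mul_sum]
        nlinarith
  · intro A hA
    exact srmKey m n c (srmF m n A).card A hA le_rfl
end
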